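/- Let 𝒢₁ ⇉ M₁ and 𝒢₂ ⇉ M₂ be Lie groupoids, U_i ⊂ M_i open subsets, and φ : (𝒢₁)|_{U₁} → (𝒢₂)|_{U₂} an isomorphism of the reduction groupoids covering a diffeomorphism U₁ → U₂. Assume that φ(U₁ ∩ 𝒢₁-orbit of M₁∖U₁) does not intersect U₂ ∩ (𝒢₂-orbit of M₂∖U₂), and that M := M₁ ∪_φ M₂ is a Hausdorff manifold. Then the quotient ℋ := (𝒢₁ ⊔ 𝒢₂)/∼_φ carries a natural groupoid structure over M: whenever g₁ ∈ 𝒢₁ and g₂ ∈ 𝒢₂ satisfy d(g₁) = r(g₂) in M, both g₁ and g₂ lie (up to the identification φ) in the same 𝒢_i, so composition is well defined; moreover (ℋ)|_{M_i} ≅ 𝒢_i. -/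

import Mathlib

/-- A groupoid with objects (units) `Ob` and arrows `Arr`, with domain (source) `d`,
range (target) `r`, a multiplication `mul g h` (meaningful when `d g = r h`), unit
embedding `u`, and inversion `inv`. -/
structure Gpd where
  Ob : Type
  Arr : Type
  d : Arr → Ob
  r : Arr → Ob
  mul : Arr → Arr → Arr
  u : Ob → Arr
  inv : Arr → Arr
  d_u : ∀ x, d (u x) = x
  r_u : ∀ x, r (u x) = x
  d_mul : ∀ g h, d g = r h → d (mul g h) = d h
  r_mul : ∀ g h, d g = r h → r (mul g h) = r g
  mul_assoc : ∀ g h k, d g = r h → d h = r k → mul (mul g h) k = mul g (mul h k)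
  mul_unit : ∀ g, mul g (u (d g)) = g
  unit_mul : ∀ g, mul (u (r g)) g = g
  d_inv : ∀ g, d (inv g) = r g
  r_inv : ∀ g, r (inv g) = d g
  mul_inv : ∀ g, mul g (inv g) = u (r g)
  inv_mul : ∀ g, mul (inv g) g = u (d g)

/-- The set of arrows of the reduction `𝒢|_A = d⁻¹(A) ∩ r⁻¹(A)`. -/
def Gpd.redArr (G : Gpd) (A : Set G.Ob) : Set G.Arr := {g | G.d g ∈ A ∧ G.r g ∈ A}

/-- The `𝒢`-orbit (saturation) `𝒢 B 𝒢` of a set of units `B`. -/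
def Gpd.orbit (G : Gpd) (B : Set G.Ob) : Set G.Ob :=
  {x | ∃ g, G.d g ∈ B ∧ G.r g = x}

/-- The gluing relation on `M₁ ⊔ M₂` generated by `x ∼ φb x` for `x ∈ U₁`. -/
def glueRel {Ob₁ Ob₂ : Type} (U₁ : Set Ob₁) (φb : Ob₁ → Ob₂) :
    (Ob₁ ⊕ Ob₂) → (Ob₁ ⊕ Ob₂) → Prop := fun a b =>
  ∃ x ∈ U₁, (a = Sum.inl x ∧ b = Sum.inr (φb x)) ∨ (a = Sum.inr (φb x) ∧ b = Sum.inl x)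

/-- The glued space of units `M₁ ∪_φ M₂`. -/
def glueOb {Ob₁ Ob₂ : Type} (U₁ : Set Ob₁) (φb : Ob₁ → Ob₂) : Type :=
  Quot (glueRel U₁ φb)

instance {Ob₁ Ob₂ : Type} [TopologicalSpace Ob₁] [TopologicalSpace Ob₂]
    (U₁ : Set Ob₁) (φb : Ob₁ → Ob₂) : TopologicalSpace (glueOb U₁ φb) :=
  inferInstanceAs (TopologicalSpace (Quot _))

namespace GlueAux

/-- characterization of the glue quotient -/
theorem glue_exact {Ob₁ Ob₂ : Type} {U₁ : Set Ob₁} {φb : Ob₁ → Ob₂} (hinj : Set.InjOn φb U₁)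
    {a b : Ob₁ ⊕ Ob₂} (h : Quot.mk (glueRel U₁ φb) a = Quot.mk (glueRel U₁ φb) b) :
    a = b ∨ (∃ x ∈ U₁, a = Sum.inl x ∧ b = Sum.inr (φb x)) ∨
      (∃ x ∈ U₁, b = Sum.inl x ∧ a = Sum.inr (φb x)) := by
  have h' := Quot.eqvGen_exact h
  clear h
  induction h' with
  | rel x y hxy =>
    rcases hxy with ⟨x', hx', ⟨rfl, rfl⟩ | ⟨rfl, rfl⟩⟩
    · exact Or.inr (Or.inl ⟨x', hx', rfl, rfl⟩)
    · exact Or.inr (Or.inr ⟨x', hx', rfl, rfl⟩)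
  | refl x => exact Or.inl rfl
  | symm x y _ ih =>
    rcases ih with rfl | ⟨x', hx', h1, h2⟩ | ⟨x', hx', h1, h2⟩
    · exact Or.inl rfl
    · exact Or.inr (Or.inr ⟨x', hx', h1, h2⟩)
    · exact Or.inr (Or.inl ⟨x', hx', h1, h2⟩)
  | trans x y z _ _ ih1 ih2 =>
    rcases ih1 with rfl | ⟨x₁, hx₁, rfl, rfl⟩ | ⟨x₁, hx₁, h1, rfl⟩
    · exact ih2
    · rcases ih2 with rfl | ⟨x₂, hx₂, h1, h2⟩ | ⟨x₂, hx₂, h1, h2⟩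
      · exact Or.inr (Or.inl ⟨x₁, hx₁, rfl, rfl⟩)
      · exact absurd h1 (by simp)
      · have : x₁ = x₂ := hinj hx₁ hx₂ (by injection h2)
        exact Or.inl (by rw [this, h1])
    · subst h1
      rcases ih2 with rfl | ⟨x₂, hx₂, h1, h2⟩ | ⟨x₂, hx₂, h1, h2⟩
      · exact Or.inr (Or.inr ⟨x₁, hx₁, rfl, rfl⟩)
      · have : x₁ = x₂ := by injection h1
        exact Or.inl (by rw [this, h2])
      · exact absurd h2 (by simp)

theorem mk_glue {Ob₁ Ob₂ : Type} {U₁ : Set Ob₁} (φb : Ob₁ → Ob₂) {x : Ob₁} (hx : x ∈ U₁) :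
    Quot.mk (glueRel U₁ φb) (Sum.inl x) = Quot.mk (glueRel U₁ φb) (Sum.inr (φb x)) :=
  Quot.sound ⟨x, hx, Or.inl ⟨rfl, rfl⟩⟩

theorem mk_inl_inj {Ob₁ Ob₂ : Type} {U₁ : Set Ob₁} {φb : Ob₁ → Ob₂} (hinj : Set.InjOn φb U₁)
    {x y : Ob₁} (h : Quot.mk (glueRel U₁ φb) (Sum.inl x) = Quot.mk (glueRel U₁ φb) (Sum.inl y)) :
    x = y := by
  rcases glue_exact hinj h with h' | ⟨x', _, h1, h2⟩ | ⟨x', _, h1, h2⟩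
  · injection h'
  · exact absurd h2 (by simp)
  · exact absurd h2 (by simp)

theorem mk_inr_inj {Ob₁ Ob₂ : Type} {U₁ : Set Ob₁} {φb : Ob₁ → Ob₂} (hinj : Set.InjOn φb U₁)
    {x y : Ob₂} (h : Quot.mk (glueRel U₁ φb) (Sum.inr x) = Quot.mk (glueRel U₁ φb) (Sum.inr y)) :
    x = y := by
  rcases glue_exact hinj h with h' | ⟨x', _, h1, h2⟩ | ⟨x', _, h1, h2⟩
  · injection h'
  · exact absurd h1 (by simp)
  · exact absurd h1 (by simp)

theorem mk_inl_inr {Ob₁ Ob₂ : Type} {U₁ : Set Ob₁} {φb : Ob₁ → Ob₂} (hinj : Set.InjOn φb U₁)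
    {x : Ob₁} {y : Ob₂}
    (h : Quot.mk (glueRel U₁ φb) (Sum.inl x) = Quot.mk (glueRel U₁ φb) (Sum.inr y)) :
    x ∈ U₁ ∧ y = φb x := by
  rcases glue_exact hinj h with h' | ⟨x', hx', h1, h2⟩ | ⟨x', hx', h1, h2⟩
  · exact absurd h' (by simp)
  · obtain rfl : x = x' := by injection h1
    exact ⟨hx', by injection h2⟩
  · exact absurd h1 (by simp)

/-- uniqueness of inverses -/
theorem _root_.Gpd.inv_eq (G : Gpd) {a b : G.Arr} (hd : G.d a = G.r b)
    (h : G.mul a b = G.u (G.r a)) : b = G.inv a := by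
  calc b = G.mul (G.u (G.r b)) b := (G.unit_mul b).symm
    _ = G.mul (G.u (G.d a)) b := by rw [hd]
    _ = G.mul (G.mul (G.inv a) a) b := by rw [G.inv_mul]
    _ = G.mul (G.inv a) (G.mul a b) := G.mul_assoc _ _ _ (G.d_inv a) hd
    _ = G.mul (G.inv a) (G.u (G.r a)) := by rw [h]
    _ = G.mul (G.inv a) (G.u (G.d (G.inv a))) := by rw [G.d_inv]
    _ = G.inv a := G.mul_unit _

theorem _root_.Gpd.u_idem (G : Gpd) (x : G.Ob) : G.mul (G.u x) (G.u x) = G.u x := by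
  have := G.mul_unit (G.u x); rwa [G.d_u] at this

theorem _root_.Gpd.idem_eq_unit (G : Gpd) {a : G.Arr} (hdr : G.d a = G.r a)
    (h : G.mul a a = a) : a = G.u (G.r a) := by
  calc a = G.mul a (G.u (G.d a)) := (G.mul_unit a).symm
    _ = G.mul a (G.u (G.r a)) := by rw [hdr]
    _ = G.mul a (G.mul a (G.inv a)) := by rw [G.mul_inv]
    _ = G.mul (G.mul a a) (G.inv a) := (G.mul_assoc _ _ _ hdr (by rw [G.r_inv])).symm
    _ = G.mul a (G.inv a) := by rw [h]
    _ = G.u (G.r a) := G.mul_inv a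

theorem _root_.Gpd.inv_mem_red (G : Gpd) {U : Set G.Ob} {g : G.Arr} (h : g ∈ G.redArr U) :
    G.inv g ∈ G.redArr U := ⟨by rw [G.d_inv]; exact h.2, by rw [G.r_inv]; exact h.1⟩

theorem _root_.Gpd.u_mem_red (G : Gpd) {U : Set G.Ob} {x : G.Ob} (h : x ∈ U) :
    G.u x ∈ G.redArr U := ⟨by rw [G.d_u]; exact h, by rw [G.r_u]; exact h⟩

theorem _root_.Gpd.mul_mem_red (G : Gpd) {U : Set G.Ob} {g k : G.Arr} (hg : g ∈ G.redArr U)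
    (hk : k ∈ G.redArr U) (hc : G.d g = G.r k) : G.mul g k ∈ G.redArr U :=
  ⟨by rw [G.d_mul _ _ hc]; exact hk.1, by rw [G.r_mul _ _ hc]; exact hg.2⟩

theorem _root_.Gpd.mem_orbit (G : Gpd) {B : Set G.Ob} (g : G.Arr) (h1 : G.d g ∈ B) :
    G.r g ∈ G.orbit B := ⟨g, h1, rfl⟩


section Morph

variable {G₁ G₂ : Gpd} {U₁ : Set G₁.Ob} {U₂ : Set G₂.Ob}
  {φb : G₁.Ob → G₂.Ob} {φ : G₁.Arr → G₂.Arr}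

theorem phi_u
    (hφd : ∀ g ∈ G₁.redArr U₁, G₂.d (φ g) = φb (G₁.d g))
    (hφr : ∀ g ∈ G₁.redArr U₁, G₂.r (φ g) = φb (G₁.r g))
    (hφmul : ∀ g h, g ∈ G₁.redArr U₁ → h ∈ G₁.redArr U₁ → G₁.d g = G₁.r h →
      φ (G₁.mul g h) = G₂.mul (φ g) (φ h))
    {x : G₁.Ob} (hx : x ∈ U₁) : φ (G₁.u x) = G₂.u (φb x) := by
  have hm : G₁.u x ∈ G₁.redArr U₁ := G₁.u_mem_red hx
  have hda : G₂.d (φ (G₁.u x)) = φb x := by rw [hφd _ hm, G₁.d_u]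
  have hra : G₂.r (φ (G₁.u x)) = φb x := by rw [hφr _ hm, G₁.r_u]
  have haa : G₂.mul (φ (G₁.u x)) (φ (G₁.u x)) = φ (G₁.u x) := by
    rw [← hφmul _ _ hm hm (by rw [G₁.d_u, G₁.r_u]), G₁.u_idem]
  have := G₂.idem_eq_unit (hda.trans hra.symm) haa
  rw [hra] at this; exact this

theorem phi_inv
    (hφd : ∀ g ∈ G₁.redArr U₁, G₂.d (φ g) = φb (G₁.d g))
    (hφr : ∀ g ∈ G₁.redArr U₁, G₂.r (φ g) = φb (G₁.r g))
    (hφmul : ∀ g h, g ∈ G₁.redArr U₁ → h ∈ G₁.redArr U₁ → G₁.d g = G₁.r h →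
      φ (G₁.mul g h) = G₂.mul (φ g) (φ h))
    {g : G₁.Arr} (hg : g ∈ G₁.redArr U₁) : φ (G₁.inv g) = G₂.inv (φ g) := by
  refine G₂.inv_eq ?_ ?_
  · rw [hφd _ hg, hφr _ (G₁.inv_mem_red hg), G₁.r_inv]
  · rw [← hφmul _ _ hg (G₁.inv_mem_red hg) (by rw [G₁.r_inv]), G₁.mul_inv,
      phi_u hφd hφr hφmul hg.2, hφr _ hg]

end Morph

open scoped Classical

/-- the arrows of the glued groupoid : canonical representatives -/
def HArr (G₁ G₂ : Gpd) (U₂ : Set G₂.Ob) : Type :=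
  G₁.Arr ⊕ {h : G₂.Arr // h ∉ G₂.redArr U₂}

section Defs

variable {G₁ G₂ : Gpd} {U₁ : Set G₁.Ob} {U₂ : Set G₂.Ob}
  {φb : G₁.Ob → G₂.Ob} {φ : G₁.Arr → G₂.Arr}

/-- canonicalization of an arrow of `G₂` -/
noncomputable def can (hφ : Set.BijOn φ (G₁.redArr U₁) (G₂.redArr U₂)) (h : G₂.Arr) :
    HArr G₁ G₂ U₂ :=
  if hh : ∃ g, g ∈ G₁.redArr U₁ ∧ φ g = h then Sum.inl hh.choose
  else Sum.inr ⟨h, fun hmem => hh (by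
    obtain ⟨g, hg, e⟩ := hφ.surjOn hmem; exact ⟨g, hg, e⟩)⟩

def D (U₁ : Set G₁.Ob) (φb : G₁.Ob → G₂.Ob) : HArr G₁ G₂ U₂ → glueOb U₁ φb
  | Sum.inl g => Quot.mk _ (Sum.inl (G₁.d g))
  | Sum.inr h => Quot.mk _ (Sum.inr (G₂.d h.1))

def R (U₁ : Set G₁.Ob) (φb : G₁.Ob → G₂.Ob) : HArr G₁ G₂ U₂ → glueOb U₁ φb
  | Sum.inl g => Quot.mk _ (Sum.inl (G₁.r g))
  | Sum.inr h => Quot.mk _ (Sum.inr (G₂.r h.1))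

def Inv : HArr G₁ G₂ U₂ → HArr G₁ G₂ U₂
  | Sum.inl g => Sum.inl (G₁.inv g)
  | Sum.inr h => Sum.inr ⟨G₂.inv h.1, fun hmem => h.2
      ⟨by rw [← G₂.r_inv h.1]; exact hmem.2, by rw [← G₂.d_inv h.1]; exact hmem.1⟩⟩

noncomputable def Mul (hφ : Set.BijOn φ (G₁.redArr U₁) (G₂.redArr U₂)) :
    HArr G₁ G₂ U₂ → HArr G₁ G₂ U₂ → HArr G₁ G₂ U₂
  | Sum.inl g, Sum.inl k => Sum.inl (G₁.mul g k)
  | Sum.inl g, Sum.inr k => can hφ (G₂.mul (φ g) k.1)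
  | Sum.inr g, Sum.inl k => can hφ (G₂.mul g.1 (φ k))
  | Sum.inr g, Sum.inr k => can hφ (G₂.mul g.1 k.1)

noncomputable def Uu (hφb : Set.BijOn φb U₁ U₂) : glueOb U₁ φb → HArr G₁ G₂ U₂ :=
  Quot.lift
    (fun a => match a with
      | Sum.inl x => Sum.inl (G₁.u x)
      | Sum.inr y =>
        if hy : ∃ x, x ∈ U₁ ∧ φb x = y then Sum.inl (G₁.u hy.choose)
        else Sum.inr ⟨G₂.u y, fun hmem => hy (by
          have hy2 : y ∈ U₂ := by rw [← G₂.d_u y]; exact hmem.1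
          obtain ⟨x, hx, e⟩ := hφb.surjOn hy2; exact ⟨x, hx, e⟩)⟩)
    (by
      rintro a b ⟨x, hx, ⟨rfl, rfl⟩ | ⟨rfl, rfl⟩⟩ <;>
      · have h1 : ∃ x', x' ∈ U₁ ∧ φb x' = φb x := ⟨x, hx, rfl⟩
        have h2 := h1.choose_spec
        have h3 : h1.choose = x := hφb.injOn h2.1 hx h2.2
        dsimp only [HArr]
        simp only [dif_pos h1, h3])

end Defs

section Lemmas

variable {G₁ G₂ : Gpd} {U₁ : Set G₁.Ob} {U₂ : Set G₂.Ob}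
  {φb : G₁.Ob → G₂.Ob} {φ : G₁.Arr → G₂.Arr}
  (hφb : Set.BijOn φb U₁ U₂)
  (hφ : Set.BijOn φ (G₁.redArr U₁) (G₂.redArr U₂))
  (hφd : ∀ g ∈ G₁.redArr U₁, G₂.d (φ g) = φb (G₁.d g))
  (hφr : ∀ g ∈ G₁.redArr U₁, G₂.r (φ g) = φb (G₁.r g))
  (hφmul : ∀ g h, g ∈ G₁.redArr U₁ → h ∈ G₁.redArr U₁ → G₁.d g = G₁.r h →
      φ (G₁.mul g h) = G₂.mul (φ g) (φ h))
  (hdisj : φb '' (U₁ ∩ G₁.orbit U₁ᶜ) ∩ (U₂ ∩ G₂.orbit U₂ᶜ) = ∅)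

theorem can_eq_inl {g : G₁.Arr} {h : G₂.Arr} (hg : g ∈ G₁.redArr U₁) (e : φ g = h) :
    can hφ h = Sum.inl g := by
  have hex : ∃ g', g' ∈ G₁.redArr U₁ ∧ φ g' = h := ⟨g, hg, e⟩
  unfold can HArr
  rw [dif_pos hex]
  exact congrArg _ (hφ.injOn hex.choose_spec.1 hg (hex.choose_spec.2.trans e.symm))

theorem can_eq_inr {h : G₂.Arr} (hh : h ∉ G₂.redArr U₂) (p : h ∉ G₂.redArr U₂) :
    can hφ h = Sum.inr ⟨h, p⟩ := by
  unfold can HArr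
  rw [dif_neg]
  rintro ⟨g, hg, rfl⟩
  exact hh (hφ.mapsTo hg)

theorem can_inl {h : G₂.Arr} {g : G₁.Arr} (e : can hφ h = Sum.inl g) :
    g ∈ G₁.redArr U₁ ∧ φ g = h ∧ h ∈ G₂.redArr U₂ := by
  unfold can HArr at e
  split at e
  · next hex =>
    obtain rfl : hex.choose = g := by injection e
    exact ⟨hex.choose_spec.1, hex.choose_spec.2,
      hex.choose_spec.2 ▸ hφ.mapsTo hex.choose_spec.1⟩
  · exact absurd e (by simp)

theorem can_inr {h : G₂.Arr} {k : {h : G₂.Arr // h ∉ G₂.redArr U₂}}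
    (e : can hφ h = Sum.inr k) : k.1 = h ∧ h ∉ G₂.redArr U₂ := by
  unfold can HArr at e
  split at e
  · exact absurd e (by simp)
  · next hex =>
    obtain rfl : (⟨h, _⟩ : {h : G₂.Arr // h ∉ G₂.redArr U₂}) = k := by injection e
    refine ⟨rfl, fun hmem => hex ?_⟩
    obtain ⟨g, hg, e'⟩ := hφ.surjOn hmem
    exact ⟨g, hg, e'⟩

theorem can_injective {h h' : G₂.Arr} (e : can hφ h = can hφ h') : h = h' := by
  rcases e' : can hφ h with g | k
  · rw [e'] at e
    obtain ⟨_, e1, _⟩ := can_inl hφ e'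
    obtain ⟨_, e2, _⟩ := can_inl hφ e.symm
    rw [← e1, ← e2]
  · rw [e'] at e
    obtain ⟨e1, _⟩ := can_inr hφ e'
    obtain ⟨e2, _⟩ := can_inr hφ e.symm
    rw [← e1, ← e2]

include hφd in
theorem D_can (h : G₂.Arr) : D U₁ φb (can hφ h) = Quot.mk _ (Sum.inr (G₂.d h)) := by
  rcases e : can hφ h with g | k
  · obtain ⟨hg, rfl, -⟩ := can_inl hφ e
    show Quot.mk _ (Sum.inl (G₁.d g)) = _
    rw [hφd g hg]
    exact mk_glue φb hg.1
  · obtain ⟨e1, -⟩ := can_inr hφ e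
    show Quot.mk _ (Sum.inr (G₂.d k.1)) = _
    rw [e1]

include hφr in
theorem R_can (h : G₂.Arr) : R U₁ φb (can hφ h) = Quot.mk _ (Sum.inr (G₂.r h)) := by
  rcases e : can hφ h with g | k
  · obtain ⟨hg, rfl, -⟩ := can_inl hφ e
    show Quot.mk _ (Sum.inl (G₁.r g)) = _
    rw [hφr g hg]
    exact mk_glue φb hg.2
  · obtain ⟨e1, -⟩ := can_inr hφ e
    show Quot.mk _ (Sum.inr (G₂.r k.1)) = _
    rw [e1]

include hφd hφr hφmul in
theorem can_inv {h : G₂.Arr} : Inv (can hφ h) = can hφ (G₂.inv h) := by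
  rcases e : can hφ h with g | k
  · obtain ⟨hg, rfl, -⟩ := can_inl hφ e
    show Sum.inl (G₁.inv g) = _
    exact (can_eq_inl hφ (G₁.inv_mem_red hg) (phi_inv hφd hφr hφmul hg)).symm
  · obtain ⟨e1, h2⟩ := can_inr hφ e
    subst e1
    have hni : G₂.inv k.1 ∉ G₂.redArr U₂ := fun hm => h2
      ⟨by rw [← G₂.r_inv k.1]; exact hm.2, by rw [← G₂.d_inv k.1]; exact hm.1⟩
    exact (can_eq_inr hφ hni hni).symm

theorem Uu_inl (x : G₁.Ob) :
    Uu hφb (Quot.mk (glueRel U₁ φb) (Sum.inl x)) = (Sum.inl (G₁.u x) : HArr G₁ G₂ U₂) := rfl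

include hφ hφd hφr hφmul in
theorem Uu_inr (y : G₂.Ob) :
    Uu hφb (Quot.mk (glueRel U₁ φb) (Sum.inr y)) = can hφ (G₂.u y) := by
  by_cases hy : y ∈ U₂
  · obtain ⟨x, hx, rfl⟩ := hφb.surjOn hy
    have hex : ∃ x', x' ∈ U₁ ∧ φb x' = φb x := ⟨x, hx, rfl⟩
    have e1 : Uu hφb (Quot.mk (glueRel U₁ φb) (Sum.inr (φb x)))
        = (Sum.inl (G₁.u hex.choose) : HArr G₁ G₂ U₂) := dif_pos hex
    rw [e1]
    refine (can_eq_inl hφ (G₁.u_mem_red hex.choose_spec.1) ?_).symm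
    rw [phi_u hφd hφr hφmul hex.choose_spec.1, hex.choose_spec.2]
  · have hne : ¬ ∃ x', x' ∈ U₁ ∧ φb x' = y := by
      rintro ⟨x', hx', rfl⟩; exact hy (hφb.mapsTo hx')
    have hnr : G₂.u y ∉ G₂.redArr U₂ := fun hmem => hy (by rw [← G₂.d_u y]; exact hmem.1)
    have e1 : Uu hφb (Quot.mk (glueRel U₁ φb) (Sum.inr y))
        = (Sum.inr ⟨G₂.u y, hnr⟩ : HArr G₁ G₂ U₂) := dif_neg hne
    rw [e1, can_eq_inr hφ hnr hnr]

include hφb hφd hφr hφmul in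
theorem mul_can_can {p q : G₂.Arr} (hc : G₂.d p = G₂.r q) :
    Mul hφ (can hφ p) (can hφ q) = can hφ (G₂.mul p q) := by
  rcases ep : can hφ p with g | k <;> rcases eq' : can hφ q with g' | k'
  · obtain ⟨hg, rfl, -⟩ := can_inl hφ ep
    obtain ⟨hg', rfl, -⟩ := can_inl hφ eq'
    have hdg : G₁.d g = G₁.r g' := by
      refine hφb.injOn hg.1 hg'.2 ?_
      rw [← hφd g hg, ← hφr g' hg', hc]
    show Sum.inl (G₁.mul g g') = _
    rw [← hφmul _ _ hg hg' hdg]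
    exact (can_eq_inl hφ (G₁.mul_mem_red hg hg' hdg) rfl).symm
  · obtain ⟨hg, rfl, -⟩ := can_inl hφ ep
    obtain ⟨e1, -⟩ := can_inr hφ eq'
    show can hφ (G₂.mul (φ g) k'.1) = _
    rw [e1]
  · obtain ⟨e1, -⟩ := can_inr hφ ep
    obtain ⟨hg', rfl, -⟩ := can_inl hφ eq'
    show can hφ (G₂.mul k.1 (φ g')) = _
    rw [e1]
  · obtain ⟨e1, -⟩ := can_inr hφ ep
    obtain ⟨e2, -⟩ := can_inr hφ eq'
    show can hφ (G₂.mul k.1 k'.1) = _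
    rw [e1, e2]

include hφb hdisj in
theorem sat {x : G₁.Ob} (hx : x ∈ U₁) (h1 : x ∈ G₁.orbit U₁ᶜ)
    (h2 : φb x ∈ G₂.orbit U₂ᶜ) : False :=
  Set.notMem_empty (φb x)
    (hdisj ▸ ⟨⟨x, ⟨hx, h1⟩, rfl⟩, hφb.mapsTo hx, h2⟩)

include hφb hφd hφr hdisj in
theorem comp_cases {a b : HArr G₁ G₂ U₂} (hcomp : D U₁ φb a = R U₁ φb b) :
    (∃ g k, a = Sum.inl g ∧ b = Sum.inl k ∧ G₁.d g = G₁.r k ∧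
      Mul hφ a b = Sum.inl (G₁.mul g k)) ∨
    (∃ p q, a = can hφ p ∧ b = can hφ q ∧ G₂.d p = G₂.r q ∧
      Mul hφ a b = can hφ (G₂.mul p q)) := by
  rcases a with g | p <;> rcases b with k | q
  · exact Or.inl ⟨g, k, rfl, rfl, mk_inl_inj hφb.injOn hcomp, rfl⟩
  · -- a = inl g, b = inr q
    obtain ⟨hdg, hrq⟩ := mk_inl_inr hφb.injOn hcomp
    have hq2 : G₂.d q.1 ∉ U₂ := fun hd => q.2 ⟨hd, hrq ▸ hφb.mapsTo hdg⟩
    have horb : G₂.r q.1 ∈ G₂.orbit U₂ᶜ := G₂.mem_orbit q.1 (Set.mem_compl hq2)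
    have hrg : G₁.r g ∈ U₁ := by
      by_contra hng
      refine sat hφb hdisj hdg ?_ (by rw [← hrq]; exact horb)
      have := G₁.mem_orbit (G₁.inv g) (by rw [G₁.d_inv]; exact Set.mem_compl hng)
      rwa [G₁.r_inv] at this
    have hg : g ∈ G₁.redArr U₁ := ⟨hdg, hrg⟩
    refine Or.inr ⟨φ g, q.1, (can_eq_inl hφ hg rfl).symm, (can_eq_inr hφ q.2 q.2).symm, ?_, rfl⟩
    rw [hφd g hg, hrq]
  · -- a = inr p, b = inl k
    obtain ⟨hrk, hdp⟩ := mk_inl_inr hφb.injOn hcomp.symm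
    have hp2 : G₂.r p.1 ∉ U₂ := fun hr => p.2 ⟨hdp ▸ hφb.mapsTo hrk, hr⟩
    have horb : G₂.d p.1 ∈ G₂.orbit U₂ᶜ := by
      have := G₂.mem_orbit (G₂.inv p.1) (by rw [G₂.d_inv]; exact Set.mem_compl hp2)
      rwa [G₂.r_inv] at this
    have hdk : G₁.d k ∈ U₁ := by
      by_contra hnk
      exact sat hφb hdisj hrk (G₁.mem_orbit k (Set.mem_compl hnk)) (by rw [← hdp]; exact horb)
    have hk : k ∈ G₁.redArr U₁ := ⟨hdk, hrk⟩
    refine Or.inr ⟨p.1, φ k, (can_eq_inr hφ p.2 p.2).symm, (can_eq_inl hφ hk rfl).symm, ?_, rfl⟩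
    rw [hφr k hk, hdp]
  · exact Or.inr ⟨p.1, q.1, (can_eq_inr hφ p.2 p.2).symm, (can_eq_inr hφ q.2 q.2).symm,
      mk_inr_inj hφb.injOn hcomp, rfl⟩

include hφb hφd hφr hdisj in
theorem D_Mul {a b : HArr G₁ G₂ U₂} (hcomp : D U₁ φb a = R U₁ φb b) :
    D U₁ φb (Mul hφ a b) = D U₁ φb b := by
  rcases comp_cases hφb hφ hφd hφr hdisj hcomp with
    ⟨g, k, rfl, rfl, hc, e⟩ | ⟨p, q, ha, hb, hc, e⟩
  · rw [e]; show Quot.mk _ (Sum.inl (G₁.d (G₁.mul g k))) = _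
    rw [G₁.d_mul _ _ hc]; rfl
  · rw [e, hb, D_can hφ hφd, D_can hφ hφd, G₂.d_mul _ _ hc]

include hφb hφd hφr hdisj in
theorem R_Mul {a b : HArr G₁ G₂ U₂} (hcomp : D U₁ φb a = R U₁ φb b) :
    R U₁ φb (Mul hφ a b) = R U₁ φb a := by
  rcases comp_cases hφb hφ hφd hφr hdisj hcomp with
    ⟨g, k, rfl, rfl, hc, e⟩ | ⟨p, q, ha, hb, hc, e⟩
  · rw [e]; show Quot.mk _ (Sum.inl (G₁.r (G₁.mul g k))) = _
    rw [G₁.r_mul _ _ hc]; rfl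
  · rw [e, ha, R_can hφ hφr, R_can hφ hφr, G₂.r_mul _ _ hc]

include hφb hφd hφr hφmul hdisj in
theorem Assoc {a b c : HArr G₁ G₂ U₂} (hab : D U₁ φb a = R U₁ φb b)
    (hbc : D U₁ φb b = R U₁ φb c) :
    Mul hφ (Mul hφ a b) c = Mul hφ a (Mul hφ b c) := by
  rcases comp_cases hφb hφ hφd hφr hdisj hab with
    ⟨g, k, rfl, rfl, hgk, e1⟩ | ⟨p, q, ha, hb, hpq, e1⟩
  · rcases comp_cases hφb hφ hφd hφr hdisj hbc with
      ⟨k₂, m, hbk, rfl, hkm, e2⟩ | ⟨q₂, m, hbq, hc, hq2m, e2⟩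
    · -- all in G₁
      obtain rfl : k₂ = k := by injection hbk.symm
      rw [e1, e2]
      exact congrArg Sum.inl (G₁.mul_assoc _ _ _ hgk hkm)
    · -- (a,b) in G₁, (b,c) in G₂
      obtain ⟨hk, hq2, -⟩ := can_inl hφ hbq.symm
      subst hq2
      rw [e1, e2, hc]
      rcases em' : can hφ m with m' | mm
      · -- m is in the image of φ
        obtain ⟨hm', em, hm2⟩ := can_inl hφ em'
        rw [← em] at hq2m ⊢
        have hkm : G₁.d k = G₁.r m' :=
          hφb.injOn hk.1 hm'.2 (by rw [← hφd _ hk, ← hφr _ hm']; exact hq2m)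
        rw [← hφmul _ _ hk hm' hkm, can_eq_inl hφ (G₁.mul_mem_red hk hm' hkm) rfl]
        exact congrArg Sum.inl (G₁.mul_assoc _ _ _ hgk hkm)
      · -- m is not reducible
        obtain ⟨hm1, hm2⟩ := can_inr hφ em'
        have hrm : G₂.r m ∈ U₂ := by rw [← hq2m]; exact (hφ.mapsTo hk).1
        have hdm : G₂.d m ∉ U₂ := fun hd => hm2 ⟨hd, hrm⟩
        have horb : G₂.r m ∈ G₂.orbit U₂ᶜ := G₂.mem_orbit m (Set.mem_compl hdm)
        have hφbdk : φb (G₁.d k) = G₂.r m := by rw [← hφd _ hk]; exact hq2m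
        have hdknotorb : G₁.d k ∉ G₁.orbit U₁ᶜ :=
          fun ho => sat hφb hdisj hk.1 ho (by rw [hφbdk]; exact horb)
        have hrg : G₁.r g ∈ U₁ := by
          by_contra hng
          refine hdknotorb ?_
          have := G₁.mem_orbit (G₁.inv (G₁.mul g k))
            (by rw [G₁.d_inv, G₁.r_mul _ _ hgk]; exact Set.mem_compl hng)
          rwa [G₁.r_inv, G₁.d_mul _ _ hgk] at this
        have hg : g ∈ G₁.redArr U₁ := ⟨by rw [hgk]; exact hk.2, hrg⟩
        have hnred : G₂.mul (φ k) m ∉ G₂.redArr U₂ :=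
          fun hmem => hdm (by rw [← G₂.d_mul _ _ hq2m]; exact hmem.1)
        rw [can_eq_inr hφ hnred hnred]
        show can hφ (G₂.mul (φ (G₁.mul g k)) mm.1) = can hφ (G₂.mul (φ g) (G₂.mul (φ k) m))
        rw [hm1, hφmul _ _ hg hk hgk]
        congr 1
        exact G₂.mul_assoc _ _ _ (by rw [hφd _ hg, hgk, ← hφr _ hk]) hq2m
  · rcases comp_cases hφb hφ hφd hφr hdisj hbc with
      ⟨k, m, hbk, rfl, hkm, e2⟩ | ⟨q₂, m, hbq, hc, hq2m, e2⟩
    · -- (a,b) in G₂, (b,c) in G₁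
      obtain ⟨hk, hφk, -⟩ := can_inl hφ (hb.symm.trans hbk)
      rw [e1, e2, ha]
      rcases ep : can hφ p with g | pp
      · -- p in the image of φ
        obtain ⟨hg, hφg, -⟩ := can_inl hφ ep
        have hdg : G₁.d g = G₁.r k :=
          hφb.injOn hg.1 hk.2 (by rw [← hφd _ hg, ← hφr _ hk, hφg, hφk]; exact hpq)
        have hcan : can hφ (G₂.mul p q) = Sum.inl (G₁.mul g k) := by
          rw [← hφg, ← hφk, ← hφmul _ _ hg hk hdg]
          exact can_eq_inl hφ (G₁.mul_mem_red hg hk hdg) rfl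
        rw [hcan]
        show Sum.inl (G₁.mul (G₁.mul g k) m) = Sum.inl (G₁.mul g (G₁.mul k m))
        rw [G₁.mul_assoc _ _ _ hdg hkm]
      · -- p not reducible
        obtain ⟨hp1, hp2⟩ := can_inr hφ ep
        have hq : q ∈ G₂.redArr U₂ := hφk ▸ hφ.mapsTo hk
        have hrm : G₁.r m ∈ U₁ := by rw [← hkm]; exact hk.1
        have hrp : G₂.r p ∉ U₂ := fun hr => hp2 ⟨by rw [hpq]; exact hq.2, hr⟩
        have horb : G₂.d q ∈ G₂.orbit U₂ᶜ := by
          have := G₂.mem_orbit (G₂.inv (G₂.mul p q))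
            (by rw [G₂.d_inv, G₂.r_mul _ _ hpq]; exact Set.mem_compl hrp)
          rwa [G₂.r_inv, G₂.d_mul _ _ hpq] at this
        have hφbrm : φb (G₁.r m) = G₂.d q := by
          rw [← hkm, ← hφk, ← hφd _ hk]
        have hdm : G₁.d m ∈ U₁ := by
          by_contra hnm
          exact sat hφb hdisj hrm (G₁.mem_orbit m (Set.mem_compl hnm))
            (by rw [hφbrm]; exact horb)
        have hm : m ∈ G₁.redArr U₁ := ⟨hdm, hrm⟩
        have hnpq : G₂.mul p q ∉ G₂.redArr U₂ :=
          fun hmem => hrp (by rw [← G₂.r_mul _ _ hpq]; exact hmem.2)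
        rw [can_eq_inr hφ hnpq hnpq]
        show can hφ (G₂.mul (G₂.mul p q) (φ m)) = can hφ (G₂.mul pp.1 (φ (G₁.mul k m)))
        rw [hp1, hφmul _ _ hk hm hkm, hφk]
        congr 1
        exact G₂.mul_assoc _ _ _ hpq (by rw [hφr _ hm, hφbrm])
    · -- all in G₂
      obtain rfl : q₂ = q := can_injective hφ (hbq.symm.trans hb)
      rw [e1, e2, ha, hc]
      rw [mul_can_can hφb hφ hφd hφr hφmul (by rw [G₂.d_mul _ _ hpq]; exact hq2m),
        mul_can_can hφb hφ hφd hφr hφmul (by rw [G₂.r_mul _ _ hq2m]; exact hpq)]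
      congr 1
      exact G₂.mul_assoc _ _ _ hpq hq2m

include hφ hφd hφr hφmul in
theorem D_Uu : ∀ q : glueOb U₁ φb, D U₁ φb (Uu hφb q : HArr G₁ G₂ U₂) = q := by
  refine Quot.ind ?_
  rintro (x | y)
  · show Quot.mk _ (Sum.inl (G₁.d (G₁.u x))) = _
    rw [G₁.d_u]
  · rw [Uu_inr hφb hφ hφd hφr hφmul y, D_can hφ hφd, G₂.d_u]

include hφ hφd hφr hφmul in
theorem R_Uu : ∀ q : glueOb U₁ φb, R U₁ φb (Uu hφb q : HArr G₁ G₂ U₂) = q := by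
  refine Quot.ind ?_
  rintro (x | y)
  · show Quot.mk _ (Sum.inl (G₁.r (G₁.u x))) = _
    rw [G₁.r_u]
  · rw [Uu_inr hφb hφ hφd hφr hφmul y, R_can hφ hφr, G₂.r_u]

include hφb hφd hφr hφmul in
theorem MulUnit (a : HArr G₁ G₂ U₂) : Mul hφ a (Uu hφb (D U₁ φb a)) = a := by
  rcases a with g | hh
  · show Sum.inl (G₁.mul g (G₁.u (G₁.d g))) = Sum.inl g
    rw [G₁.mul_unit]
  · show Mul hφ (Sum.inr hh) (Uu hφb (Quot.mk _ (Sum.inr (G₂.d hh.1)))) = Sum.inr hh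
    rw [Uu_inr hφb hφ hφd hφr hφmul]
    calc Mul hφ (Sum.inr hh) (can hφ (G₂.u (G₂.d hh.1)))
        = Mul hφ (can hφ hh.1) (can hφ (G₂.u (G₂.d hh.1))) := by
          rw [can_eq_inr hφ hh.2 hh.2]
      _ = can hφ (G₂.mul hh.1 (G₂.u (G₂.d hh.1))) :=
          mul_can_can hφb hφ hφd hφr hφmul (by rw [G₂.r_u])
      _ = can hφ hh.1 := by rw [G₂.mul_unit]
      _ = @id (HArr G₁ G₂ U₂) (Sum.inr hh) := can_eq_inr hφ hh.2 hh.2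

include hφb hφd hφr hφmul in
theorem UnitMul (a : HArr G₁ G₂ U₂) : Mul hφ (Uu hφb (R U₁ φb a)) a = a := by
  rcases a with g | hh
  · show Sum.inl (G₁.mul (G₁.u (G₁.r g)) g) = Sum.inl g
    rw [G₁.unit_mul]
  · show Mul hφ (Uu hφb (Quot.mk _ (Sum.inr (G₂.r hh.1)))) (Sum.inr hh) = Sum.inr hh
    rw [Uu_inr hφb hφ hφd hφr hφmul]
    calc Mul hφ (can hφ (G₂.u (G₂.r hh.1))) (Sum.inr hh)
        = Mul hφ (can hφ (G₂.u (G₂.r hh.1))) (can hφ hh.1) := by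
          rw [can_eq_inr hφ hh.2 hh.2]
      _ = can hφ (G₂.mul (G₂.u (G₂.r hh.1)) hh.1) :=
          mul_can_can hφb hφ hφd hφr hφmul (by rw [G₂.d_u])
      _ = can hφ hh.1 := by rw [G₂.unit_mul]
      _ = @id (HArr G₁ G₂ U₂) (Sum.inr hh) := can_eq_inr hφ hh.2 hh.2

include hφb hφd hφr hφmul in
theorem MulInv (a : HArr G₁ G₂ U₂) : Mul hφ a (Inv a) = Uu hφb (R U₁ φb a) := by
  rcases a with g | hh
  · show Sum.inl (G₁.mul g (G₁.inv g)) = Sum.inl (G₁.u (G₁.r g))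
    rw [G₁.mul_inv]
  · show can hφ (G₂.mul hh.1 (G₂.inv hh.1))
        = Uu hφb (Quot.mk _ (Sum.inr (G₂.r hh.1)))
    rw [Uu_inr hφb hφ hφd hφr hφmul, G₂.mul_inv]

include hφb hφd hφr hφmul in
theorem InvMul (a : HArr G₁ G₂ U₂) : Mul hφ (Inv a) a = Uu hφb (D U₁ φb a) := by
  rcases a with g | hh
  · show Sum.inl (G₁.mul (G₁.inv g) g) = Sum.inl (G₁.u (G₁.d g))
    rw [G₁.inv_mul]
  · show can hφ (G₂.mul (G₂.inv hh.1) hh.1)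
        = Uu hφb (Quot.mk _ (Sum.inr (G₂.d hh.1)))
    rw [Uu_inr hφb hφ hφd hφr hφmul, G₂.inv_mul]

theorem D_Inv (a : HArr G₁ G₂ U₂) : D U₁ φb (Inv a) = R U₁ φb a := by
  rcases a with g | hh
  · show Quot.mk _ (Sum.inl (G₁.d (G₁.inv g))) = _
    rw [G₁.d_inv]; exact rfl
  · show Quot.mk _ (Sum.inr (G₂.d (G₂.inv hh.1))) = _
    rw [G₂.d_inv]; exact rfl

theorem R_Inv (a : HArr G₁ G₂ U₂) : R U₁ φb (Inv a) = D U₁ φb a := by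
  rcases a with g | hh
  · show Quot.mk _ (Sum.inl (G₁.r (G₁.inv g))) = _
    rw [G₁.r_inv]; exact rfl
  · show Quot.mk _ (Sum.inr (G₂.r (G₂.inv hh.1))) = _
    rw [G₂.r_inv]; exact rfl

end Lemmas

end GlueAux

open GlueAux in
/-- gluing of Lie groupoids, after Gualtieri–Li: groupoids `𝒢₁ ⇉ M₁`,
`𝒢₂ ⇉ M₂` with isomorphic reductions over open sets `U₁ ≅ U₂` can be glued to a
groupoid over `M = M₁ ∪_φ M₂`, provided the saturation condition holds and `M` is a
Hausdorff manifold; the reductions of the glued groupoid to `M₁`, `M₂` recover `𝒢₁`,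
`𝒢₂`. -/

theorem glue_groupoids (G₁ G₂ : Gpd)
    [TopologicalSpace G₁.Ob] [TopologicalSpace G₂.Ob]
    (U₁ : Set G₁.Ob) (U₂ : Set G₂.Ob) (hU₁ : IsOpen U₁) (hU₂ : IsOpen U₂)
    (φb : G₁.Ob → G₂.Ob) (φ : G₁.Arr → G₂.Arr)
    -- `φ` is an isomorphism of the reductions covering the homeomorphism `φb : U₁ → U₂`
    (hφb : Set.BijOn φb U₁ U₂) (hφbc : ContinuousOn φb U₁)
    (hφ : Set.BijOn φ (G₁.redArr U₁) (G₂.redArr U₂))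
    (hφd : ∀ g ∈ G₁.redArr U₁, G₂.d (φ g) = φb (G₁.d g))
    (hφr : ∀ g ∈ G₁.redArr U₁, G₂.r (φ g) = φb (G₁.r g))
    (hφmul : ∀ g h, g ∈ G₁.redArr U₁ → h ∈ G₁.redArr U₁ → G₁.d g = G₁.r h →
      φ (G₁.mul g h) = G₂.mul (φ g) (φ h))
    -- the saturation condition
    (hdisj : φb '' (U₁ ∩ G₁.orbit U₁ᶜ) ∩ (U₂ ∩ G₂.orbit U₂ᶜ) = ∅)
    -- `M := M₁ ∪_φ M₂` is a Hausdorff manifold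
    (hT2 : T2Space (glueOb U₁ φb)) :
    ∃ H : Gpd, ∃ eOb : H.Ob ≃ glueOb U₁ φb,
      ∃ (j₁ : G₁.Arr → H.Arr) (j₂ : G₂.Arr → H.Arr),
      -- `j₁`, `j₂` are groupoid morphisms covering the canonical maps `M₁, M₂ → M`
      (∀ g, eOb (H.d (j₁ g)) = Quot.mk _ (Sum.inl (G₁.d g))) ∧
      (∀ g, eOb (H.r (j₁ g)) = Quot.mk _ (Sum.inl (G₁.r g))) ∧
      (∀ g, eOb (H.d (j₂ g)) = Quot.mk _ (Sum.inr (G₂.d g))) ∧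
      (∀ g, eOb (H.r (j₂ g)) = Quot.mk _ (Sum.inr (G₂.r g))) ∧
      (∀ g h, G₁.d g = G₁.r h → j₁ (G₁.mul g h) = H.mul (j₁ g) (j₁ h)) ∧
      (∀ g h, G₂.d g = G₂.r h → j₂ (G₂.mul g h) = H.mul (j₂ g) (j₂ h)) ∧
      (∀ x, H.u (eOb.symm (Quot.mk _ (Sum.inl x))) = j₁ (G₁.u x)) ∧
      (∀ x, H.u (eOb.symm (Quot.mk _ (Sum.inr x))) = j₂ (G₂.u x)) ∧
      -- the two images are glued exactly along `φ`
      (∀ g ∈ G₁.redArr U₁, j₂ (φ g) = j₁ g) ∧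
      (∀ g₁ g₂, j₁ g₁ = j₂ g₂ → g₁ ∈ G₁.redArr U₁ ∧ g₂ = φ g₁) ∧
      Function.Injective j₁ ∧ Function.Injective j₂ ∧
      (∀ a : H.Arr, (∃ g, a = j₁ g) ∨ (∃ g, a = j₂ g)) ∧
      -- the reductions of `H` to `M₁` and to `M₂` are `𝒢₁` and `𝒢₂`
      (∀ a : H.Arr, (∃ x, eOb (H.d a) = Quot.mk _ (Sum.inl x)) →
        (∃ y, eOb (H.r a) = Quot.mk _ (Sum.inl y)) → ∃ g, a = j₁ g) ∧
      (∀ a : H.Arr, (∃ x, eOb (H.d a) = Quot.mk _ (Sum.inr x)) →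
        (∃ y, eOb (H.r a) = Quot.mk _ (Sum.inr y)) → ∃ g, a = j₂ g) := by
  refine ⟨{ Ob := glueOb U₁ φb
          , Arr := HArr G₁ G₂ U₂
          , d := D U₁ φb
          , r := R U₁ φb
          , mul := Mul hφ
          , u := Uu hφb
          , inv := Inv
          , d_u := D_Uu hφb hφ hφd hφr hφmul
          , r_u := R_Uu hφb hφ hφd hφr hφmul
          , d_mul := fun a b hc => D_Mul hφb hφ hφd hφr hdisj hc
          , r_mul := fun a b hc => R_Mul hφb hφ hφd hφr hdisj hc
          , mul_assoc := fun a b c h1 h2 => Assoc hφb hφ hφd hφr hφmul hdisj h1 h2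
          , mul_unit := MulUnit hφb hφ hφd hφr hφmul
          , unit_mul := UnitMul hφb hφ hφd hφr hφmul
          , d_inv := D_Inv
          , r_inv := R_Inv
          , mul_inv := MulInv hφb hφ hφd hφr hφmul
          , inv_mul := InvMul hφb hφ hφd hφr hφmul },
        Equiv.refl _, Sum.inl, can hφ,
        fun g => rfl, fun g => rfl,
        fun g => D_can hφ hφd g, fun g => R_can hφ hφr g,
        fun g h _ => rfl,
        fun g h hc => (mul_can_can hφb hφ hφd hφr hφmul hc).symm,
        fun x => rfl,
        fun x => Uu_inr hφb hφ hφd hφr hφmul x,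
        fun g hg => can_eq_inl hφ hg rfl,
        fun g₁ g₂ h => ?_,
        fun a b h => by injection h,
        fun a b h => can_injective hφ h,
        ?_, ?_, ?_⟩
  · obtain ⟨hm, he, -⟩ := can_inl hφ h.symm
    exact ⟨hm, he.symm⟩
  · rintro (g | hh)
    · exact Or.inl ⟨g, rfl⟩
    · exact Or.inr ⟨hh.1, (can_eq_inr hφ hh.2 hh.2).symm⟩
  · rintro (g | hh) hx hy
    · exact ⟨g, rfl⟩
    · obtain ⟨x, hx⟩ := hx
      obtain ⟨y, hy⟩ := hy
      obtain ⟨hx1, hx2⟩ := mk_inl_inr hφb.injOn (hx.symm : _)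
      obtain ⟨hy1, hy2⟩ := mk_inl_inr hφb.injOn (hy.symm : _)
      exact absurd ⟨hx2 ▸ hφb.mapsTo hx1, hy2 ▸ hφb.mapsTo hy1⟩ hh.2
  · rintro (g | hh) hx hy
    · obtain ⟨x, hx⟩ := hx
      obtain ⟨y, hy⟩ := hy
      obtain ⟨hx1, -⟩ := mk_inl_inr hφb.injOn hx
      obtain ⟨hy1, -⟩ := mk_inl_inr hφb.injOn hy
      exact ⟨φ g, (can_eq_inl hφ ⟨hx1, hy1⟩ rfl).symm⟩
    · exact ⟨hh.1, (can_eq_inr hφ hh.2 hh.2).symm⟩
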